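/- Finite mixtures of Poisson distributions are identifiable: let n, m ≥ 1, let w : Fin n → ℝ and w' : Fin m → ℝ be weights with wᵢ > 0, Σᵢ wᵢ = 1, w'ⱼ > 0, Σⱼ w'ⱼ = 1, and let λ : Fin n → ℝ and λ' : Fin m → ℝ be rates with every λᵢ, λ'ⱼ > 0, the λᵢ pairwise distinct and the λ'ⱼ pairwise distinct. If Σ_{i ∈ Fin n} wᵢ p(t; λᵢ) = Σ_{j ∈ Fin m} w'ⱼ p(t; λ'ⱼ) for every t ∈ ℕ, then n = m and there exists a bijection e : Fin n ≃ Fin m with w'_{e(i)} = wᵢ and λ'_{e(i)} = λᵢ for all i. -/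

import Mathlib

open Finset Polynomial

/-- The Poisson probability mass function with rate `λ`. -/
noncomputable def poissonPMF (lam : ℝ) (t : ℕ) : ℝ :=
  Real.exp (-lam) * lam ^ t / (Nat.factorial t)

/-- Auxiliary: if finitely many signed "moments" all vanish, the coefficients vanish. -/
lemma moment_vanish (S : Finset ℝ) (c : ℝ → ℝ)
    (h : ∀ t : ℕ, ∑ x ∈ S, c x * x ^ t = 0) : ∀ x ∈ S, c x = 0 := by
  intro x₀ hx₀
  set P : ℝ[X] := Lagrange.basis S (id : ℝ → ℝ) x₀ with hP
  have hev : ∀ x ∈ S, P.eval x = if x = x₀ then 1 else 0 := by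
    intro x hx
    split_ifs with hxx
    · subst hxx; exact Lagrange.eval_basis_self (v := (id : ℝ → ℝ)) (fun _ _ _ _ h => h) hx₀
    · exact Lagrange.eval_basis_of_ne (v := (id : ℝ → ℝ)) (Ne.symm hxx) hx
  have key : ∑ x ∈ S, c x * P.eval x = c x₀ := by
    rw [Finset.sum_congr rfl (fun x hx => by rw [hev x hx])]
    simp [Finset.sum_ite_eq' S x₀, hx₀]
  have key2 : ∑ x ∈ S, c x * P.eval x = 0 := by
    have : ∀ x : ℝ, P.eval x = ∑ t ∈ Finset.range (P.natDegree + 1), P.coeff t * x ^ t := by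
      intro x
      rw [Polynomial.eval_eq_sum_range]
    calc ∑ x ∈ S, c x * P.eval x
        = ∑ x ∈ S, ∑ t ∈ Finset.range (P.natDegree + 1), P.coeff t * (c x * x ^ t) := by
          refine Finset.sum_congr rfl fun x _ => ?_
          rw [this x, Finset.mul_sum]
          exact Finset.sum_congr rfl fun t _ => by ring
      _ = ∑ t ∈ Finset.range (P.natDegree + 1), P.coeff t * ∑ x ∈ S, c x * x ^ t := by
          rw [Finset.sum_comm]
          exact Finset.sum_congr rfl fun t _ => by rw [Finset.mul_sum]
      _ = 0 := by simp [h]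
  rw [key] at key2; exact key2

/-- Fiber of an injective function over one of its values is a singleton. -/
lemma fiber_singleton {k : ℕ} (f : Fin k → ℝ) (hf : Function.Injective f) (i₀ : Fin k) :
    Finset.univ.filter (fun i => f i = f i₀) = {i₀} := by
  ext i
  simp [hf.eq_iff]

/-- Finite mixtures of Poisson distributions are identifiable: two finite mixtures with
positive weights summing to one and pairwise distinct positive rates that agree on every
`t ∈ ℕ` must have the same number of components and matching parameters up to a bijection
of the component labels. -/
theorem poisson_mixture_identifiable
    {n m : ℕ} (hn : 1 ≤ n) (hm : 1 ≤ m)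
    (w : Fin n → ℝ) (w' : Fin m → ℝ)
    (lam : Fin n → ℝ) (lam' : Fin m → ℝ)
    (hw : ∀ i, 0 < w i) (hwsum : ∑ i, w i = 1)
    (hw' : ∀ j, 0 < w' j) (hw'sum : ∑ j, w' j = 1)
    (hlam : ∀ i, 0 < lam i) (hlam' : ∀ j, 0 < lam' j)
    (hdist : Function.Injective lam) (hdist' : Function.Injective lam')
    (heq : ∀ t : ℕ,
      ∑ i, w i * poissonPMF (lam i) t = ∑ j, w' j * poissonPMF (lam' j) t) :
    n = m ∧ ∃ e : Fin n ≃ Fin m, ∀ i, w' (e i) = w i ∧ lam' (e i) = lam i := by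
  classical
  set S : Finset ℝ := (Finset.univ.image lam) ∪ (Finset.univ.image lam') with hS
  set c : ℝ → ℝ := fun x =>
    ((∑ i ∈ Finset.univ.filter (fun i => lam i = x), w i)
      - (∑ j ∈ Finset.univ.filter (fun j => lam' j = x), w' j)) * Real.exp (-x) with hc
  -- moment identity
  have hmom : ∀ t : ℕ, ∑ x ∈ S, c x * x ^ t = 0 := by
    intro t
    have hfib : ∑ x ∈ S, (∑ i ∈ Finset.univ.filter (fun i => lam i = x), w i)
        * Real.exp (-x) * x ^ t = ∑ i, w i * Real.exp (-(lam i)) * (lam i) ^ t := by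
      rw [← Finset.sum_fiberwise_of_maps_to (g := lam)
        (fun i _ => Finset.mem_union_left _ (Finset.mem_image_of_mem lam (Finset.mem_univ i)))]
      refine Finset.sum_congr rfl fun x _ => ?_
      rw [Finset.sum_mul, Finset.sum_mul]
      refine Finset.sum_congr rfl fun i hi => ?_
      rw [(Finset.mem_filter.mp hi).2]
    have hfib' : ∑ x ∈ S, (∑ j ∈ Finset.univ.filter (fun j => lam' j = x), w' j)
        * Real.exp (-x) * x ^ t = ∑ j, w' j * Real.exp (-(lam' j)) * (lam' j) ^ t := by
      rw [← Finset.sum_fiberwise_of_maps_to (g := lam')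
        (fun j _ => Finset.mem_union_right _ (Finset.mem_image_of_mem lam' (Finset.mem_univ j)))]
      refine Finset.sum_congr rfl fun x _ => ?_
      rw [Finset.sum_mul, Finset.sum_mul]
      refine Finset.sum_congr rfl fun j hj => ?_
      rw [(Finset.mem_filter.mp hj).2]
    have hfac : (Nat.factorial t : ℝ) ≠ 0 := Nat.cast_ne_zero.mpr t.factorial_ne_zero
    have heqt := heq t
    simp only [poissonPMF] at heqt
    have heqt' : ∑ i, w i * Real.exp (-(lam i)) * (lam i) ^ t
        = ∑ j, w' j * Real.exp (-(lam' j)) * (lam' j) ^ t := by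
      have := congrArg (· * (Nat.factorial t : ℝ)) heqt
      simp only [Finset.sum_mul] at this
      calc ∑ i, w i * Real.exp (-(lam i)) * (lam i) ^ t
          = ∑ i, w i * (Real.exp (-(lam i)) * (lam i) ^ t / (Nat.factorial t))
            * (Nat.factorial t : ℝ) := by
            refine Finset.sum_congr rfl fun i _ => ?_; field_simp
        _ = ∑ j, w' j * (Real.exp (-(lam' j)) * (lam' j) ^ t / (Nat.factorial t))
            * (Nat.factorial t : ℝ) := this
        _ = ∑ j, w' j * Real.exp (-(lam' j)) * (lam' j) ^ t := by
            refine Finset.sum_congr rfl fun j _ => ?_; field_simp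
    calc ∑ x ∈ S, c x * x ^ t
        = (∑ x ∈ S, (∑ i ∈ Finset.univ.filter (fun i => lam i = x), w i)
            * Real.exp (-x) * x ^ t)
          - ∑ x ∈ S, (∑ j ∈ Finset.univ.filter (fun j => lam' j = x), w' j)
            * Real.exp (-x) * x ^ t := by
          rw [← Finset.sum_sub_distrib]
          refine Finset.sum_congr rfl fun x _ => ?_
          simp only [hc]; ring
      _ = 0 := by rw [hfib, hfib', heqt', sub_self]
  have hzero := moment_vanish S c hmom
  -- coefficient equality at each point of S
  have hcc : ∀ x ∈ S, (∑ i ∈ Finset.univ.filter (fun i => lam i = x), w i)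
      = ∑ j ∈ Finset.univ.filter (fun j => lam' j = x), w' j := by
    intro x hx
    have := hzero x hx
    simp only [hc] at this
    rcases mul_eq_zero.mp this with h | h
    · linarith [sub_eq_zero.mp h]
    · exact absurd h (Real.exp_ne_zero _)
  -- forward map
  have hE : ∀ i : Fin n, ∃ j : Fin m, lam' j = lam i ∧ w' j = w i := by
    intro i
    have hxS : lam i ∈ S := Finset.mem_union_left _ (Finset.mem_image_of_mem lam (Finset.mem_univ i))
    have h1 := hcc (lam i) hxS
    rw [fiber_singleton lam hdist i, Finset.sum_singleton] at h1
    have hne : (Finset.univ.filter (fun j => lam' j = lam i)).Nonempty := by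
      by_contra hne
      rw [Finset.not_nonempty_iff_eq_empty] at hne
      rw [hne, Finset.sum_empty] at h1
      exact absurd h1 (ne_of_gt (hw i))
    obtain ⟨j, hj⟩ := hne
    have hjl : lam' j = lam i := (Finset.mem_filter.mp hj).2
    refine ⟨j, hjl, ?_⟩
    have : Finset.univ.filter (fun j' => lam' j' = lam i) = {j} := by
      rw [← hjl, fiber_singleton lam' hdist' j]
    rw [this, Finset.sum_singleton] at h1
    exact h1.symm
  have hF : ∀ j : Fin m, ∃ i : Fin n, lam i = lam' j := by
    intro j
    have hxS : lam' j ∈ S :=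
      Finset.mem_union_right _ (Finset.mem_image_of_mem lam' (Finset.mem_univ j))
    have h1 := hcc (lam' j) hxS
    rw [fiber_singleton lam' hdist' j, Finset.sum_singleton] at h1
    have hne : (Finset.univ.filter (fun i => lam i = lam' j)).Nonempty := by
      by_contra hne
      rw [Finset.not_nonempty_iff_eq_empty] at hne
      rw [hne, Finset.sum_empty] at h1
      exact absurd h1.symm (ne_of_gt (hw' j))
    obtain ⟨i, hi⟩ := hne
    exact ⟨i, (Finset.mem_filter.mp hi).2⟩
  choose E hEl hEw using hE
  choose F hFl using hF
  have hFE : ∀ i, F (E i) = i := fun i => hdist (by rw [hFl (E i), hEl i])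
  have hEF : ∀ j, E (F j) = j := fun j => hdist' (by rw [hEl (F j), hFl j])
  refine ⟨?_, ⟨⟨E, F, hFE, hEF⟩, fun i => ⟨hEw i, hEl i⟩⟩⟩
  have : Fintype.card (Fin n) = Fintype.card (Fin m) :=
    Fintype.card_congr ⟨E, F, hFE, hEF⟩
  simpa using this
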